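/- Let A(s) be a P×M Laurent polynomial matrix on the unit circle with A(s) ∼ (V₁, V₂) and V = V₁ + V₂. Suppose for each s on the unit circle, Q(s), R(s) are QR factors of A(s) (generalized sense), and define Δ₀(s)=1, Δ_k(s) = Δ_{k−1}(s)·R_{k,k}(s)², q̃_k(s) = Δ_{k−1}(s)·R_{k,k}(s)·q_k(s), r̃_k(s)ᵀ = Δ_{k−1}(s)·R_{k,k}(s)·r_k(s)ᵀ. Then: Δ_k(s) ∼ (kV, kV), q̃_k(s) ∼ ((k−1)V + V₁, (k−1)V + V₂), and r̃_k(s)ᵀ ∼ (kV, kV), i.e., each is a Laurent polynomial (vector) of the indicated degree bounds on the unit circle. -/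

import Mathlib

open Matrix

/-- `f` is a Laurent polynomial of type `(W₁, W₂)` on the unit circle:
`f s = ∑_{v=-W₁}^{W₂} c v * s^(-v)` for all `s` with `|s| = 1`. -/
def IsLP (W₁ W₂ : ℕ) (f : ℂ → ℂ) : Prop :=
  ∃ c : ℤ → ℂ, ∀ s : ℂ, ‖s‖ = 1 →
    f s = ∑ v ∈ Finset.Icc (-(W₁ : ℤ)) (W₂ : ℤ), c v * s ^ (-v)

/-- Generalized QR decomposition: `A = Q * R`, the nonzero columns of `Q` are
orthonormal, `R` is upper triangular with real nonnegative diagonal, and `R = Qᴴ * A`. -/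
def IsQR {P M : ℕ} (A Q : Matrix (Fin P) (Fin M) ℂ)
    (R : Matrix (Fin M) (Fin M) ℂ) : Prop :=
  A = Q * R ∧
  (∀ i j : Fin M, (fun p => Q p i) ≠ 0 → (fun p => Q p j) ≠ 0 →
      (Qᴴ * Q) i j = if i = j then 1 else 0) ∧
  (∀ i j : Fin M, j < i → R i j = 0) ∧
  (∀ i : Fin M, (R i i).im = 0 ∧ 0 ≤ (R i i).re) ∧
  R = Qᴴ * A

section AuxLemmas

lemma isLP_congr {W₁ W₂ : ℕ} {f g : ℂ → ℂ}
    (h : ∀ s : ℂ, ‖s‖ = 1 → f s = g s) (hg : IsLP W₁ W₂ g) :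
    IsLP W₁ W₂ f := by
  obtain ⟨c, hc⟩ := hg
  exact ⟨c, fun s hs => (h s hs).trans (hc s hs)⟩

lemma isLP_of_sum {ι : Type*} {W₁ W₂ : ℕ} (T : Finset ι) (e : ι → ℂ) (d : ι → ℤ)
    (hd : ∀ i ∈ T, d i ∈ Finset.Icc (-(W₁ : ℤ)) (W₂ : ℤ))
    {f : ℂ → ℂ} (hf : ∀ s : ℂ, ‖s‖ = 1 → f s = ∑ i ∈ T, e i * s ^ (-(d i))) :
    IsLP W₁ W₂ f := by
  classical
  refine ⟨fun v => ∑ i ∈ T.filter (fun i => d i = v), e i, fun s hs => ?_⟩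
  rw [hf s hs, ← Finset.sum_fiberwise_of_maps_to hd (fun i => e i * s ^ (-(d i)))]
  refine Finset.sum_congr rfl fun v _ => ?_
  rw [Finset.sum_mul]
  refine Finset.sum_congr rfl fun i hi => ?_
  rw [(Finset.mem_filter.mp hi).2]

lemma isLP_sum {ι : Type*} {W₁ W₂ : ℕ} (T : Finset ι) (F : ι → ℂ → ℂ)
    (h : ∀ i ∈ T, IsLP W₁ W₂ (F i)) :
    IsLP W₁ W₂ (fun s => ∑ i ∈ T, F i s) := by
  classical
  choose c hc using h
  refine ⟨fun v => ∑ i ∈ T.attach, c i.1 i.2 v, fun s hs => ?_⟩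
  simp only
  calc ∑ i ∈ T, F i s = ∑ i ∈ T.attach, F i.1 s := (Finset.sum_attach T _).symm
    _ = ∑ i ∈ T.attach, ∑ v ∈ Finset.Icc (-(W₁:ℤ)) (W₂:ℤ), c i.1 i.2 v * s ^ (-v) :=
        Finset.sum_congr rfl fun i _ => hc i.1 i.2 s hs
    _ = ∑ v ∈ Finset.Icc (-(W₁:ℤ)) (W₂:ℤ), ∑ i ∈ T.attach, c i.1 i.2 v * s ^ (-v) :=
        Finset.sum_comm
    _ = ∑ v ∈ Finset.Icc (-(W₁:ℤ)) (W₂:ℤ), (∑ i ∈ T.attach, c i.1 i.2 v) * s ^ (-v) := by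
        simp [Finset.sum_mul]

lemma isLP_mul {a b a' b' : ℕ} {f g : ℂ → ℂ} (hf : IsLP a b f) (hg : IsLP a' b' g) :
    IsLP (a + a') (b + b') (fun s => f s * g s) := by
  obtain ⟨c, hc⟩ := hf
  obtain ⟨d, hd⟩ := hg
  refine isLP_of_sum ((Finset.Icc (-(a : ℤ)) (b : ℤ)) ×ˢ (Finset.Icc (-(a' : ℤ)) (b' : ℤ)))
    (fun p => c p.1 * d p.2) (fun p => p.1 + p.2) ?_ ?_
  · rintro ⟨v, w⟩ hp
    simp only [Finset.mem_product, Finset.mem_Icc] at hp ⊢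
    push_cast
    omega
  · intro s hs
    have hs0 : s ≠ 0 := by
      intro h; rw [h] at hs; simp at hs
    rw [hc s hs, hd s hs, Finset.sum_mul_sum]
    rw [Finset.sum_product]
    refine Finset.sum_congr rfl fun v _ => Finset.sum_congr rfl fun w _ => ?_
    rw [neg_add, zpow_add₀ hs0]
    ring

lemma isLP_one : IsLP 0 0 (fun _ => 1) := by
  refine ⟨fun _ => 1, fun s hs => ?_⟩
  norm_num

lemma isLP_const_mul {W₁ W₂ : ℕ} (k : ℂ) {f : ℂ → ℂ} (hf : IsLP W₁ W₂ f) :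
    IsLP W₁ W₂ (fun s => k * f s) := by
  obtain ⟨c, hc⟩ := hf
  refine ⟨fun v => k * c v, fun s hs => ?_⟩
  simp only [hc s hs, Finset.mul_sum, mul_assoc]

lemma isLP_prod {ι : Type*} (T : Finset ι) (u w : ι → ℕ) (F : ι → ℂ → ℂ)
    (h : ∀ i ∈ T, IsLP (u i) (w i) (F i)) :
    IsLP (∑ i ∈ T, u i) (∑ i ∈ T, w i) (fun s => ∏ i ∈ T, F i s) := by
  classical
  induction T using Finset.cons_induction with
  | empty => simpa using isLP_one
  | cons a T ha ih =>
      simp only [Finset.prod_cons, Finset.sum_cons]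
      exact isLP_mul (h a (Finset.mem_cons_self a T))
        (ih fun i hi => h i (Finset.mem_cons_of_mem hi))

lemma conj_eq_inv {s : ℂ} (hs : ‖s‖ = 1) : (starRingEnd ℂ) s = s⁻¹ := by
  have h1 : s * (starRingEnd ℂ) s = 1 := by
    rw [Complex.mul_conj]
    norm_cast
    rw [← Complex.sq_norm, hs]; norm_num
  exact eq_inv_of_mul_eq_one_right h1

lemma isLP_conj {W₁ W₂ : ℕ} {f : ℂ → ℂ} (hf : IsLP W₁ W₂ f) :
    IsLP W₂ W₁ (fun s => (starRingEnd ℂ) (f s)) := by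
  obtain ⟨c, hc⟩ := hf
  refine isLP_of_sum (Finset.Icc (-(W₁ : ℤ)) (W₂ : ℤ)) (fun v => (starRingEnd ℂ) (c v))
    (fun v => -v) ?_ ?_
  · intro v hv
    simp only [Finset.mem_Icc] at hv ⊢
    omega
  · intro s hs
    simp only [hc s hs, map_sum, _root_.map_mul, map_zpow₀, conj_eq_inv hs, neg_neg, _root_.inv_zpow]
    refine Finset.sum_congr rfl fun v _ => ?_
    rw [← _root_.zpow_neg, neg_neg]

lemma isLP_det {n : ℕ} (u w : Fin n → ℕ) (M : ℂ → Matrix (Fin n) (Fin n) ℂ)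
    (h : ∀ i j, IsLP (u i) (w i) (fun s => M s i j)) :
    IsLP (∑ i, u i) (∑ i, w i) (fun s => (M s).det) := by
  have : ∀ s : ℂ, (M s).det =
      ∑ σ : Equiv.Perm (Fin n), ((Equiv.Perm.sign σ : ℤ) : ℂ) * ∏ i, M s (σ i) i :=
    fun s => Matrix.det_apply' (M s)
  refine isLP_congr (fun s _ => this s) ?_
  refine isLP_sum Finset.univ _ fun σ _ => isLP_const_mul _ ?_
  have := isLP_prod (Finset.univ : Finset (Fin n)) (fun i => u (σ i)) (fun i => w (σ i))
    (fun i => fun s => M s (σ i) i) (fun i _ => h (σ i) i)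
  rwa [Equiv.sum_comp σ u, Equiv.sum_comp σ w] at this

def embLE {M k : ℕ} (hk : k ≤ M) : Fin k ↪ Fin M :=
  ⟨Fin.castLE hk, Fin.castLE_injective hk⟩

lemma filter_lt_eq_map {M k : ℕ} (hk : k ≤ M) :
    Finset.univ.filter (fun i : Fin M => (i : ℕ) < k) = Finset.univ.map (embLE hk) := by
  ext i
  simp only [Finset.mem_filter, Finset.mem_univ, true_and, Finset.mem_map, embLE,
    Function.Embedding.coeFn_mk]
  constructor
  · intro h
    exact ⟨⟨(i : ℕ), h⟩, by apply Fin.ext; simp⟩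
  · rintro ⟨a, rfl⟩
    simpa using a.isLt

lemma prod_filter_lt {M k : ℕ} (hk : k ≤ M) (g : Fin M → ℂ) :
    ∏ i ∈ Finset.univ.filter (fun i : Fin M => (i : ℕ) < k), g i
      = ∏ a : Fin k, g (Fin.castLE hk a) := by
  rw [filter_lt_eq_map hk, Finset.prod_map]
  rfl

lemma sum_eq_sum_castLE {M k : ℕ} (hk : k ≤ M) (g : Fin M → ℂ)
    (hg : ∀ i : Fin M, k ≤ (i : ℕ) → g i = 0) :
    ∑ i : Fin M, g i = ∑ a : Fin k, g (Fin.castLE hk a) := by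
  classical
  have h1 : ∑ i ∈ Finset.univ.filter (fun i : Fin M => (i : ℕ) < k), g i
      = ∑ a : Fin k, g (Fin.castLE hk a) := by
    rw [filter_lt_eq_map hk, Finset.sum_map]; rfl
  rw [← h1]
  symm
  apply Finset.sum_filter_of_ne
  intro i _ hne
  by_contra h
  push_neg at h
  exact hne (hg i h)


end AuxLemmas

/-- Theorem 4.1 of the paper: the mapped QR factors are Laurent polynomials.
Here indices are 0-based: `Δ_k(s) = ∏_{i ≤ k} R_{i,i}(s)²` is the `(k+1)`-th Δ of the
paper, and the `k`-th (0-based) column/row correspond to the `(k+1)`-th of the paper,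
so that `q̃_k(s) = (∏_{i<k} R_{i,i}(s)²) R_{k,k}(s) q_k(s)` and
`r̃_k(s)ᵀ = (∏_{i<k} R_{i,i}(s)²) R_{k,k}(s) r_k(s)ᵀ`. -/
theorem qr_mapping_isLP {P M : ℕ} (V₁ V₂ : ℕ)
    (A : ℂ → Matrix (Fin P) (Fin M) ℂ)
    (Q : ℂ → Matrix (Fin P) (Fin M) ℂ) (R : ℂ → Matrix (Fin M) (Fin M) ℂ)
    (hA : ∀ (p : Fin P) (m : Fin M), IsLP V₁ V₂ (fun s => A s p m))
    (hQR : ∀ s : ℂ, ‖s‖ = 1 → IsQR (A s) (Q s) (R s)) :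
    (∀ k : ℕ, k ≤ M →
      IsLP (k * (V₁ + V₂)) (k * (V₁ + V₂)) (fun s =>
        ∏ i ∈ Finset.univ.filter (fun i : Fin M => (i : ℕ) < k), (R s i i) ^ 2)) ∧
    (∀ (k : Fin M) (p : Fin P),
      IsLP ((k : ℕ) * (V₁ + V₂) + V₁) ((k : ℕ) * (V₁ + V₂) + V₂) (fun s =>
        (∏ i ∈ Finset.univ.filter (fun i : Fin M => i < k), (R s i i) ^ 2) *
          R s k k * Q s p k)) ∧
    (∀ (k j : Fin M),
      IsLP (((k : ℕ) + 1) * (V₁ + V₂)) (((k : ℕ) + 1) * (V₁ + V₂)) (fun s =>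
        (∏ i ∈ Finset.univ.filter (fun i : Fin M => i < k), (R s i i) ^ 2) *
          R s k k * R s k j)) := by
  classical
  have hG : ∀ m n : Fin M, IsLP (V₁ + V₂) (V₁ + V₂) (fun s => ((A s)ᴴ * A s) m n) := by
    intro m n
    have he : ∀ s : ℂ, ((A s)ᴴ * A s) m n
        = ∑ q : Fin P, (starRingEnd ℂ) (A s q m) * A s q n := by
      intro s
      simp [Matrix.mul_apply, Matrix.conjTranspose_apply, Complex.star_def]
    refine isLP_congr (fun s _ => he s) ?_
    refine isLP_sum Finset.univ _ fun q _ => ?_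
    have := isLP_mul (isLP_conj (hA q m)) (hA q n)
    rwa [add_comm V₂ V₁] at this
  have hGR : ∀ s : ℂ, ‖s‖ = 1 → (A s)ᴴ * A s = (R s)ᴴ * R s := by
    intro s hs
    obtain ⟨h1, -, -, -, h5⟩ := hQR s hs
    have hRH : (R s)ᴴ = (A s)ᴴ * Q s := by
      rw [h5, Matrix.conjTranspose_mul, Matrix.conjTranspose_conjTranspose]
    rw [hRH, Matrix.mul_assoc, ← h1]
  refine ⟨?_, ?_, ?_⟩
  · intro k hk
    have hdet := isLP_det (fun _ : Fin k => V₁ + V₂) (fun _ => V₁ + V₂)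
        (fun s => ((A s)ᴴ * A s).submatrix (Fin.castLE hk) (Fin.castLE hk))
        (fun i j => hG _ _)
    rw [Finset.sum_const, Finset.card_univ, Fintype.card_fin, smul_eq_mul] at hdet
    refine isLP_congr (fun s hs => ?_) hdet
    obtain ⟨-, -, h3, h4, -⟩ := hQR s hs
    set X : Matrix (Fin k) (Fin k) ℂ :=
      (R s).submatrix (Fin.castLE hk) (Fin.castLE hk) with hX
    have hBX : ((A s)ᴴ * A s).submatrix (Fin.castLE hk) (Fin.castLE hk) = Xᴴ * X := by
      ext a b
      rw [Matrix.submatrix_apply, hGR s hs]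
      simp only [Matrix.mul_apply, Matrix.conjTranspose_apply, hX, Matrix.submatrix_apply]
      exact sum_eq_sum_castLE hk _ (fun i hi => by
        rw [h3 _ _ (by rw [Fin.lt_def]; exact lt_of_lt_of_le a.isLt hi), star_zero, zero_mul])
    have hXut : X.BlockTriangular id := by
      intro i j hji
      exact h3 _ _ (by rw [Fin.lt_def]; exact hji)
    have hreal : ∀ i : Fin M, star (R s i i) = R s i i :=
      fun i => Complex.conj_eq_iff_im.mpr (h4 i).1
    have hdetX : X.det = ∏ a : Fin k, R s (Fin.castLE hk a) (Fin.castLE hk a) :=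
      Matrix.det_of_upperTriangular hXut
    beta_reduce
    rw [hBX, Matrix.det_mul, Matrix.det_conjTranspose, hdetX]
    rw [star_prod]
    simp only [hreal]
    rw [← Finset.prod_mul_distrib, prod_filter_lt hk]
    exact Finset.prod_congr rfl fun a _ => sq _
  · intro k p
    have hk1 : (k : ℕ) + 1 ≤ M := k.isLt
    have hk0 : (k : ℕ) ≤ M := le_of_lt k.isLt
    have hdet := isLP_det (fun a : Fin ((k : ℕ) + 1) => if (a : ℕ) < (k : ℕ) then V₁ + V₂ else V₁)
        (fun a => if (a : ℕ) < (k : ℕ) then V₁ + V₂ else V₂)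
        (fun s => Matrix.of fun a b => if (a : ℕ) < (k : ℕ) then
            ((A s)ᴴ * A s) (Fin.castLE hk1 a) (Fin.castLE hk1 b)
          else A s p (Fin.castLE hk1 b))
        (fun a b => by
          by_cases h : (a : ℕ) < (k : ℕ)
          · simpa [h] using hG (Fin.castLE hk1 a) (Fin.castLE hk1 b)
          · simpa [h] using hA p (Fin.castLE hk1 b))
    have hsum : ∀ x : ℕ, ∑ a : Fin ((k : ℕ) + 1),
        (if (a : ℕ) < (k : ℕ) then V₁ + V₂ else x) = (k : ℕ) * (V₁ + V₂) + x := by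
      intro x
      rw [Fin.sum_univ_castSucc]
      simp [Fin.is_lt, mul_comm]
    rw [hsum V₁, hsum V₂] at hdet
    refine isLP_congr (fun s hs => ?_) hdet
    obtain ⟨h1, -, h3, h4, -⟩ := hQR s hs
    set X : Matrix (Fin ((k : ℕ) + 1)) (Fin ((k : ℕ) + 1)) ℂ :=
      (R s).submatrix (Fin.castLE hk1) (Fin.castLE hk1) with hX
    set Z : Matrix (Fin ((k : ℕ) + 1)) (Fin ((k : ℕ) + 1)) ℂ :=
      Matrix.of fun a i => if (a : ℕ) < (k : ℕ) then
          star (R s (Fin.castLE hk1 i) (Fin.castLE hk1 a))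
        else Q s p (Fin.castLE hk1 i) with hZ
    have hC : (Matrix.of fun (a b : Fin ((k : ℕ) + 1)) => if (a : ℕ) < (k : ℕ) then
          ((A s)ᴴ * A s) (Fin.castLE hk1 a) (Fin.castLE hk1 b)
        else A s p (Fin.castLE hk1 b)) = Z * X := by
      ext a b
      rw [Matrix.of_apply]
      by_cases h : (a : ℕ) < (k : ℕ)
      · rw [if_pos h, hGR s hs]
        simp only [Matrix.mul_apply, Matrix.conjTranspose_apply, hX, hZ,
          Matrix.submatrix_apply, Matrix.of_apply, if_pos h]
        exact sum_eq_sum_castLE hk1 _ (fun i hi => by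
          rw [h3 _ _ (by rw [Fin.lt_def]; exact lt_of_lt_of_le a.isLt hi), star_zero, zero_mul])
      · rw [if_neg h, h1]
        simp only [Matrix.mul_apply, hX, hZ, Matrix.submatrix_apply, Matrix.of_apply, if_neg h]
        exact sum_eq_sum_castLE hk1 _ (fun i hi => by
          rw [h3 _ _ (by rw [Fin.lt_def]; exact lt_of_lt_of_le b.isLt hi), mul_zero])
    have hXut : X.BlockTriangular id := by
      intro i b hbi
      exact h3 _ _ (by rw [Fin.lt_def]; exact hbi)
    have hZlt : Z.BlockTriangular OrderDual.toDual := by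
      intro a i hai
      have hai' : a < i := hai
      have hak : (a : ℕ) < (k : ℕ) := lt_of_lt_of_le hai' (Nat.lt_succ_iff.mp i.isLt)
      simp only [hZ, Matrix.of_apply, if_pos hak]
      rw [h3 _ _ (by rw [Fin.lt_def]; exact hai'), star_zero]
    have hreal : ∀ i : Fin M, star (R s i i) = R s i i :=
      fun i => Complex.conj_eq_iff_im.mpr (h4 i).1
    have hembl : Fin.castLE hk1 (Fin.last (k : ℕ)) = k := by apply Fin.ext; simp
    have hembc : ∀ a : Fin (k : ℕ),
        Fin.castLE hk1 (Fin.castSucc a) = Fin.castLE hk0 a := by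
      intro a; apply Fin.ext; simp
    have hdetX : X.det = (∏ a : Fin (k : ℕ), R s (Fin.castLE hk0 a) (Fin.castLE hk0 a))
        * R s k k := by
      rw [Matrix.det_of_upperTriangular hXut, Fin.prod_univ_castSucc]
      simp only [hX, Matrix.submatrix_apply, hembl, hembc]
    have hdetZ : Z.det = (∏ a : Fin (k : ℕ), R s (Fin.castLE hk0 a) (Fin.castLE hk0 a))
        * Q s p k := by
      rw [Matrix.det_of_lowerTriangular Z hZlt, Fin.prod_univ_castSucc]
      simp only [hZ, Matrix.of_apply]
      congr 1
      · refine Finset.prod_congr rfl fun a _ => ?_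
        rw [if_pos (by simpa using a.isLt), hembc, hreal]
      · rw [if_neg (by simp), hembl]
    beta_reduce
    rw [hC, Matrix.det_mul, hdetX, hdetZ]
    have hfil : ∏ i ∈ Finset.univ.filter (fun i : Fin M => i < k), (R s i i) ^ 2
        = ∏ a : Fin (k : ℕ), (R s (Fin.castLE hk0 a) (Fin.castLE hk0 a)) ^ 2 :=
      prod_filter_lt hk0 _
    rw [hfil, Finset.prod_pow]
    ring

  · intro k j
    have hk1 : (k : ℕ) + 1 ≤ M := k.isLt
    have hk0 : (k : ℕ) ≤ M := le_of_lt k.isLt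
    set col : Fin ((k : ℕ) + 1) → Fin M :=
      fun b => if (b : ℕ) < (k : ℕ) then Fin.castLE hk1 b else j with hcol
    have hdet := isLP_det (fun _ : Fin ((k : ℕ) + 1) => V₁ + V₂) (fun _ => V₁ + V₂)
        (fun s => Matrix.of fun a b => ((A s)ᴴ * A s) (Fin.castLE hk1 a) (col b))
        (fun a b => hG _ _)
    rw [Finset.sum_const, Finset.card_univ, Fintype.card_fin, smul_eq_mul] at hdet
    refine isLP_congr (fun s hs => ?_) hdet
    obtain ⟨-, -, h3, h4, -⟩ := hQR s hs
    set X : Matrix (Fin ((k : ℕ) + 1)) (Fin ((k : ℕ) + 1)) ℂ :=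
      (R s).submatrix (Fin.castLE hk1) (Fin.castLE hk1) with hX
    set Y : Matrix (Fin ((k : ℕ) + 1)) (Fin ((k : ℕ) + 1)) ℂ :=
      Matrix.of fun a b => R s (Fin.castLE hk1 a) (col b) with hY
    have hD : (Matrix.of fun a b => ((A s)ᴴ * A s) (Fin.castLE hk1 a) (col b)) = Xᴴ * Y := by
      ext a b
      rw [Matrix.of_apply, hGR s hs]
      simp only [Matrix.mul_apply, Matrix.conjTranspose_apply, hX, hY,
        Matrix.submatrix_apply, Matrix.of_apply]
      exact sum_eq_sum_castLE hk1 _ (fun i hi => by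
        rw [h3 _ _ (by rw [Fin.lt_def]; exact lt_of_lt_of_le a.isLt hi), star_zero, zero_mul])
    have hXut : X.BlockTriangular id := by
      intro i b hbi
      exact h3 _ _ (by rw [Fin.lt_def]; exact hbi)
    have hYut : Y.BlockTriangular id := by
      intro i b hbi
      have hbk : (b : ℕ) < (k : ℕ) := lt_of_lt_of_le hbi (Nat.lt_succ_iff.mp i.isLt)
      simp only [hY, Matrix.of_apply, hcol, if_pos hbk]
      exact h3 _ _ (by rw [Fin.lt_def]; exact hbi)
    have hreal : ∀ i : Fin M, star (R s i i) = R s i i :=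
      fun i => Complex.conj_eq_iff_im.mpr (h4 i).1
    have hembl : Fin.castLE hk1 (Fin.last (k : ℕ)) = k := by apply Fin.ext; simp
    have hembc : ∀ a : Fin (k : ℕ),
        Fin.castLE hk1 (Fin.castSucc a) = Fin.castLE hk0 a := by
      intro a; apply Fin.ext; simp
    have hdetX : X.det = (∏ a : Fin (k : ℕ), R s (Fin.castLE hk0 a) (Fin.castLE hk0 a))
        * R s k k := by
      rw [Matrix.det_of_upperTriangular hXut, Fin.prod_univ_castSucc]
      simp only [hX, Matrix.submatrix_apply, hembl, hembc]
    have hdetY : Y.det = (∏ a : Fin (k : ℕ), R s (Fin.castLE hk0 a) (Fin.castLE hk0 a))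
        * R s k j := by
      rw [Matrix.det_of_upperTriangular hYut, Fin.prod_univ_castSucc]
      simp only [hY, Matrix.of_apply, hcol]
      rw [hembl]
      congr 1
      · refine Finset.prod_congr rfl fun a _ => ?_
        rw [if_pos (by simpa using a.isLt), hembc]
      · simp
    beta_reduce
    rw [hD, Matrix.det_mul, Matrix.det_conjTranspose, hdetX, hdetY, star_mul', star_prod]
    simp only [hreal]
    have hfil : ∏ i ∈ Finset.univ.filter (fun i : Fin M => i < k), (R s i i) ^ 2
        = ∏ a : Fin (k : ℕ), (R s (Fin.castLE hk0 a) (Fin.castLE hk0 a)) ^ 2 :=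
      prod_filter_lt hk0 _
    rw [hfil, Finset.prod_pow]
    ring
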